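/- Branching rule for one extra variable: let λ be a partition with ℓ(λ) ≤ m + 1. Then in the polynomial ring with variables x_1, …, x_m, y: s_λ(x_1, …, x_m, y) = Σ_μ y^{|λ| − |μ|} · s_μ(x_1, …, x_m), where the sum ranges over all partitions μ ⊆ λ such that λ/μ is a horizontal strip. -/

import Mathlib

open MvPolynomial

open scoped Classical

/-- The complete homogeneous symmetric polynomial `h_k` indexed by an integer,
with the convention `h_0 = 1` and `h_k = 0` for `k < 0`. -/
noncomputable def hInt (σ : Type*) [Fintype σ] [DecidableEq σ] (R : Type*) [CommRing R]
    (k : ℤ) : MvPolynomial σ R :=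
  if 0 ≤ k then hsymm σ R k.toNat else 0

/-- The Jacobi–Trudi polynomial `s_α = det (h_{α_i + j - i})` of an arbitrary integer
sequence `α`, in the variables indexed by `σ`. -/
noncomputable def jacobiTrudi (σ : Type*) [Fintype σ] [DecidableEq σ] (R : Type*) [CommRing R]
    {l : ℕ} (α : Fin l → ℤ) : MvPolynomial σ R :=
  Matrix.det (Matrix.of fun i j : Fin l => hInt σ R (α i + (j : ℕ) - (i : ℕ)))

/-- `λ/μ` is a horizontal strip: `μ ⊆ λ` and `λ_{i+1} ≤ μ_i` for all `i`. -/
def IsHorizontalStrip {l : ℕ} (lam μ : Fin l → ℕ) : Prop :=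
  (∀ i, μ i ≤ lam i) ∧ ∀ i j : Fin l, (i : ℕ) + 1 = (j : ℕ) → lam j ≤ μ i

namespace SchurBranchAux

lemma hsymm_succ (R : Type*) [CommRing R] (m n : ℕ) :
    hsymm (Fin (m+1)) R (n+1) =
      rename Fin.castSucc (hsymm (Fin m) R (n+1)) + X (Fin.last m) * hsymm (Fin (m+1)) R n := by
  classical
  rw [hsymm, hsymm, hsymm, map_sum, Finset.mul_sum,
    ← Finset.sum_filter_add_sum_filter_not Finset.univ (fun s : Sym (Fin (m+1)) (n+1) => Fin.last m ∈ s)]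
  have hB : ∑ s ∈ Finset.univ.filter (fun s : Sym (Fin (m+1)) (n+1) => ¬ Fin.last m ∈ s),
        (Multiset.map X s.1).prod
      = ∑ t : Sym (Fin m) (n+1), (rename (R := R) Fin.castSucc) (Multiset.map X t.1).prod := by
    have himg : Finset.univ.filter (fun s : Sym (Fin (m+1)) (n+1) => ¬ Fin.last m ∈ s)
        = Finset.univ.image (fun t : Sym (Fin m) (n+1) => t.map Fin.castSucc) := by
      ext s
      simp only [Finset.mem_filter, Finset.mem_univ, true_and, Finset.mem_image]
      constructor
      · intro hs
        refine ⟨⟨s.1.attach.map (fun a => (a.1.castPred (by intro h; exact hs (h ▸ a.2)))), by simp [s.2]⟩, ?_⟩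
        apply Sym.coe_injective
        show (Multiset.map _ (Multiset.map _ _)) = _
        rw [Multiset.map_map]
        calc s.1.attach.map (fun a => Fin.castSucc (Fin.castPred a.1 _))
            = s.1.attach.map (fun a => a.1) := Multiset.map_congr rfl (by
              intro x _; exact Fin.castSucc_castPred _ _)
          _ = s.1 := Multiset.attach_map_val s.1
      · rintro ⟨t, rfl⟩ h
        rw [Sym.mem_map] at h
        obtain ⟨b, -, hb⟩ := h
        exact absurd hb (Fin.castSucc_lt_last b).ne
    rw [himg, Finset.sum_image (by
      intro a _ b _ h
      exact Sym.map_injective (Fin.castSucc_injective m) _ h)]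
    apply Finset.sum_congr rfl
    intro t _
    have hc : (Sym.map Fin.castSucc t).1 = Multiset.map Fin.castSucc t.1 := rfl
    rw [hc, Multiset.map_map, map_multiset_prod, Multiset.map_map]
    congr 1
    apply Multiset.map_congr rfl
    intro x _
    simp
  have hA : ∑ s ∈ Finset.univ.filter (fun s : Sym (Fin (m+1)) (n+1) => Fin.last m ∈ s),
        (Multiset.map X s.1).prod
      = ∑ t : Sym (Fin (m+1)) n, X (Fin.last m) * (Multiset.map (X (R := R)) t.1).prod := by
    refine Finset.sum_bij' (fun s hs => s.erase (Fin.last m) (by simpa using hs))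
      (fun t _ => Fin.last m ::ₛ t) ?_ ?_ ?_ ?_ ?_
    · intro a ha; exact Finset.mem_univ _
    · intro t _
      simp [Sym.mem_cons_self]
    · intro s hs; exact Sym.cons_erase _
    · intro t _; exact Sym.erase_cons_head _ _
    · intro s hs
      have h : Fin.last m ∈ s := by simpa using hs
      have h2 : s.1 = Fin.last m ::ₘ (s.erase (Fin.last m) h).1 := (Multiset.cons_erase h).symm
      rw [h2, Multiset.map_cons, Multiset.prod_cons]
  rw [hA, hB]; exact add_comm _ _

lemma hInt_rec (R : Type*) [CommRing R] (m : ℕ) (k : ℤ) :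
    hInt (Fin (m+1)) R k = rename Fin.castSucc (hInt (Fin m) R k)
      + X (Fin.last m) * hInt (Fin (m+1)) R (k-1) := by
  by_cases h0 : 0 ≤ k
  · obtain ⟨n, rfl⟩ := Int.eq_ofNat_of_zero_le h0
    cases n with
    | zero => simp [hInt]
    | succ n =>
      have h1 : (0:ℤ) ≤ (n+1:ℕ) := by positivity
      have h2 : ((n+1:ℕ) : ℤ) - 1 = (n:ℕ) := by push_cast; ring
      rw [hInt, if_pos h1, hInt, if_pos h1, h2, hInt, if_pos (by positivity)]
      simp only [Int.toNat_natCast]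
      exact hsymm_succ R m n
  · have hneg : ¬ (0:ℤ) ≤ k - 1 := by omega
    simp [hInt, h0, hneg, show ¬ (1:ℤ) ≤ k by omega]

lemma hInt_expand (R : Type*) [CommRing R] (m : ℕ) (N : ℕ) (k : ℤ) (hk : k ≤ N) :
    hInt (Fin (m+1)) R k =
      ∑ r ∈ Finset.range (N+1),
        X (Fin.last m) ^ r * rename Fin.castSucc (hInt (Fin m) R (k - r)) := by
  induction N generalizing k with
  | zero =>
    rw [Finset.sum_range_one]
    rcases lt_or_eq_of_le hk with h | h
    · have h1 : ¬ (0:ℤ) ≤ k := by omega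
      simp [hInt, h1]
    · subst h
      simp [hInt, hsymm_zero]
  | succ N ih =>
    have hstep : ∀ r : ℕ, X (Fin.last m) ^ (r+1)
          * rename Fin.castSucc (hInt (Fin m) R (k - (r+1:ℕ)))
        = X (Fin.last m) * (X (Fin.last m) ^ r
          * rename Fin.castSucc (hInt (Fin m) R ((k-1) - r))) := by
      intro r
      rw [pow_succ]
      ring_nf
      congr 2
      push_cast
      ring
    rw [Finset.sum_range_succ' _ (N+1)]
    simp only [hstep]
    rw [← Finset.mul_sum, ← ih (k-1) (by push_cast at hk ⊢; omega)]
    rw [hInt_rec R m k]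
    push_cast
    rw [sub_zero, pow_zero, one_mul]
    exact add_comm _ _

variable (R : Type*) [CommRing R] (m : ℕ)

/-- `h_k(x₁,…,x_m)` viewed in the big ring. -/
noncomputable def g (k : ℤ) : MvPolynomial (Fin (m+1)) R :=
  rename Fin.castSucc (hInt (Fin m) R k)

/-- the Jacobi–Trudi determinant in the `x` variables only. -/
noncomputable def D (a : Fin (m+1) → ℤ) : MvPolynomial (Fin (m+1)) R :=
  Matrix.det (Matrix.of fun i j : Fin (m+1) => g R m (a i + (j : ℕ) - (i : ℕ)))

lemma g_neg {k : ℤ} (hk : k < 0) : g R m k = 0 := by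
  rw [g, hInt, if_neg (by omega), map_zero]

lemma D_eq_rename (a : Fin (m+1) → ℤ) :
    D R m a = rename Fin.castSucc (jacobiTrudi (Fin m) R a) := by
  rw [jacobiTrudi, D, AlgHom.map_det]
  rfl

lemma D_row_zero (a : Fin (m+1) → ℤ) (i : Fin (m+1)) (h : a i + m - (i : ℕ) < 0) :
    D R m a = 0 := by
  apply Matrix.det_eq_zero_of_row_eq_zero i
  intro j
  have hj : (j : ℕ) ≤ m := Fin.is_le j
  exact g_neg R m (by omega)

lemma D_zero (a : Fin (m+1) → ℤ) (p q : Fin (m+1)) (hpq : p ≠ q)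
    (h : a p - (p : ℕ) = a q - (q : ℕ)) : D R m a = 0 := by
  apply Matrix.det_zero_of_row_eq hpq
  funext j
  show g R m _ = g R m _
  congr 1
  omega

lemma D_swap (a : Fin (m+1) → ℤ) (p q : Fin (m+1)) (hpq : p ≠ q) :
    D R m (fun i => a (Equiv.swap p q i) - ((Equiv.swap p q i : ℕ) : ℤ) + (i : ℕ))
      = - D R m a := by
  have : D R m (fun i => a (Equiv.swap p q i) - ((Equiv.swap p q i : ℕ) : ℤ) + (i : ℕ))
      = Matrix.det (fun i => (Matrix.of fun i j : Fin (m+1) =>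
          g R m (a i + (j : ℕ) - (i : ℕ))) (Equiv.swap p q i)) := by
    rw [D]
    congr 1
    funext i j
    show g R m _ = g R m _
    congr 1
    ring
  rw [this]
  have h2 : (Matrix.det fun i => (Matrix.of fun i j : Fin (m+1) =>
        g R m (a i + (j : ℕ) - (i : ℕ))) ((Equiv.swap p q) i))
      = ((Matrix.of fun i j : Fin (m+1) => g R m (a i + (j : ℕ) - (i : ℕ))).submatrix
        (Equiv.swap p q) id).det := rfl
  rw [h2, Matrix.det_permute, Equiv.Perm.sign_swap hpq, ← D]
  simp

variable {m}

def swapFun (lam r : Fin (m+1) → ℕ) (t : Fin m) : Fin (m+1) → ℕ := fun k =>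
  if k = t.castSucc then (lam t.castSucc - lam t.succ) + r t.succ + 1
  else if k = t.succ then r t.castSucc - ((lam t.castSucc - lam t.succ) + 1)
  else r k

lemma castSucc_ne_succ (t : Fin m) : t.castSucc ≠ t.succ := (Fin.castSucc_lt_succ (i := t)).ne

variable (lam r : Fin (m+1) → ℕ) (t : Fin m)

lemma swapFun_castSucc : swapFun lam r t t.castSucc
    = lam t.castSucc - lam t.succ + r t.succ + 1 := if_pos rfl

lemma swapFun_succ : swapFun lam r t t.succ
    = r t.castSucc - ((lam t.castSucc - lam t.succ) + 1) := by
  rw [swapFun, if_neg (castSucc_ne_succ t).symm, if_pos rfl]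

lemma swapFun_other (k : Fin (m+1)) (h1 : k ≠ t.castSucc) (h2 : k ≠ t.succ) :
    swapFun lam r t k = r k := by
  rw [swapFun, if_neg h1, if_neg h2]

lemma swapFun_sum (hd : lam t.succ ≤ lam t.castSucc)
    (hfail : lam t.castSucc < lam t.succ + r t.castSucc) :
    ∑ i, swapFun lam r t i = ∑ i, r i := by
  classical
  have hupd : swapFun lam r t = Function.update (Function.update r t.castSucc
      (lam t.castSucc - lam t.succ + r t.succ + 1)) t.succ
      (r t.castSucc - ((lam t.castSucc - lam t.succ) + 1)) := by
    funext k
    rcases eq_or_ne k t.succ with rfl | h2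
    · rw [Function.update_self]; exact swapFun_succ lam r t
    · rw [Function.update_of_ne h2]
      rcases eq_or_ne k t.castSucc with rfl | h1
      · rw [Function.update_self]; exact swapFun_castSucc lam r t
      · rw [Function.update_of_ne h1]; exact swapFun_other lam r t k h1 h2
  rw [hupd, Finset.sum_update_of_mem (Finset.mem_univ _),
    Finset.sum_update_of_mem (by simp [Finset.mem_sdiff, castSucc_ne_succ t])]
  rw [Finset.sum_eq_add_sum_sdiff_singleton_of_mem (Finset.mem_univ t.succ) r,
    Finset.sum_eq_add_sum_sdiff_singleton_of_mem
      (show t.castSucc ∈ Finset.univ \ {t.succ} by simp [castSucc_ne_succ t]) r]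
  set S := ∑ i ∈ (Finset.univ \ {t.succ}) \ {t.castSucc}, r i
  omega

lemma swapFun_swapFun (hd : lam t.succ ≤ lam t.castSucc)
    (hfail : lam t.castSucc < lam t.succ + r t.castSucc) :
    swapFun lam (swapFun lam r t) t = r := by
  funext k
  rcases eq_or_ne k t.castSucc with rfl | h1
  · rw [swapFun_castSucc, swapFun_succ]
    omega
  rcases eq_or_ne k t.succ with rfl | h2
  · rw [swapFun_succ, swapFun_castSucc]
    omega
  · rw [swapFun_other _ _ _ _ h1 h2, swapFun_other _ _ _ _ h1 h2]

lemma swapFun_D (hd : lam t.succ ≤ lam t.castSucc)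
    (hfail : lam t.castSucc < lam t.succ + r t.castSucc) :
    D R m (fun i => (lam i : ℤ) - swapFun lam r t i)
      = - D R m (fun i => (lam i : ℤ) - r i) := by
  rw [← D_swap R m (fun i => (lam i : ℤ) - r i) t.castSucc t.succ (castSucc_ne_succ t)]
  congr 1
  funext i
  rcases eq_or_ne i t.castSucc with rfl | h1
  · rw [swapFun_castSucc, Equiv.swap_apply_left]
    simp only [Fin.val_succ, Fin.coe_castSucc]
    omega
  rcases eq_or_ne i t.succ with rfl | h2
  · rw [swapFun_succ, Equiv.swap_apply_right]
    simp only [Fin.val_succ, Fin.coe_castSucc]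
    omega
  · rw [swapFun_other _ _ _ _ h1 h2, Equiv.swap_apply_of_ne_of_ne h1 h2]
    omega

end SchurBranchAux

open SchurBranchAux Finset

/-- **Branching rule for one extra variable.**  For a partition `λ` with at most `m + 1`
parts, `s_λ(x_1, …, x_m, y) = Σ_μ y^{|λ| - |μ|} s_μ(x_1, …, x_m)`, summed over all
partitions `μ ⊆ λ` such that `λ/μ` is a horizontal strip.
Here the variables are `x_i = X i.castSucc` and `y = X (Fin.last m)`. -/
theorem schur_branching_rule (R : Type*) [CommRing R] (m : ℕ)
    (lam : Fin (m + 1) → ℕ) (hlam : Antitone lam) :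
    jacobiTrudi (Fin (m + 1)) R (fun i => (lam i : ℤ)) =
      ∑ μ ∈ (Finset.Iic lam).filter (fun μ => Antitone μ ∧ IsHorizontalStrip lam μ),
        (X (Fin.last m) : MvPolynomial (Fin (m + 1)) R) ^ ((∑ i, lam i) - ∑ i, μ i) *
          rename Fin.castSucc (jacobiTrudi (Fin m) R (fun i => (μ i : ℤ))) := by
  classical
  set y : MvPolynomial (Fin (m+1)) R := X (Fin.last m) with hy
  set N : ℕ := lam 0 + m + 1 with hN
  set B : Finset (Fin (m+1) → ℕ) := Fintype.piFinset (fun _ => Finset.range (N+1)) with hB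
  set F : (Fin (m+1) → ℕ) → MvPolynomial (Fin (m+1)) R := fun r =>
    y ^ (∑ i, r i) * D R m (fun i => (lam i : ℤ) - r i) with hF
  have hlam0 : ∀ i : Fin (m+1), lam i ≤ lam 0 := fun i => hlam (Fin.zero_le i)
  -- Step 1 : expand the determinant
  have step1 : jacobiTrudi (Fin (m+1)) R (fun i => (lam i : ℤ)) = ∑ r ∈ B, F r := by
    have hrow : ∀ i : Fin (m+1),
        (fun j : Fin (m+1) => hInt (Fin (m+1)) R ((lam i : ℤ) + (j:ℕ) - (i:ℕ)))
        = ∑ r ∈ Finset.range (N+1),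
            (fun j : Fin (m+1) => y ^ r * g R m ((lam i : ℤ) - r + (j:ℕ) - (i:ℕ))) := by
      intro i
      funext j
      rw [Finset.sum_apply]
      have hle : (lam i : ℤ) + (j:ℕ) - (i:ℕ) ≤ (N:ℕ) := by
        have h1 : lam i ≤ lam 0 := hlam (Fin.zero_le i)
        have h2 : (j:ℕ) ≤ m := Fin.is_le j
        rw [hN]; push_cast; omega
      rw [hInt_expand R m N _ hle]
      apply Finset.sum_congr rfl
      intro r _
      rw [g]
      congr 2
      ring
    have hdet : jacobiTrudi (Fin (m+1)) R (fun i => (lam i : ℤ))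
        = (Matrix.detRowAlternating :
            (Fin (m+1) → MvPolynomial (Fin (m+1)) R) [⋀^Fin (m+1)]→ₗ[MvPolynomial (Fin (m+1)) R]
              MvPolynomial (Fin (m+1)) R).toMultilinearMap
          (fun i => ∑ r ∈ Finset.range (N+1),
            (fun j : Fin (m+1) => y ^ r * g R m ((lam i : ℤ) - r + (j:ℕ) - (i:ℕ)))) := by
      rw [jacobiTrudi]
      congr 1
      funext i
      exact hrow i
    rw [hdet, MultilinearMap.map_sum_finset]
    apply Finset.sum_congr rfl
    intro r _
    have : (Matrix.detRowAlternating).toMultilinearMap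
          (fun i => (fun j : Fin (m+1) => y ^ (r i) * g R m ((lam i : ℤ) - (r i) + (j:ℕ) - (i:ℕ))))
        = Matrix.det (Matrix.of fun i j : Fin (m+1) =>
            y ^ (r i) * g R m ((lam i : ℤ) - (r i) + (j:ℕ) - (i:ℕ))) := rfl
    rw [this]
    erw [Matrix.det_mul_column (fun i => y ^ (r i)), Finset.prod_pow_eq_pow_sum]
    rfl
  -- the "good" predicate
  set Good : (Fin (m+1) → ℕ) → Prop := fun r =>
    (∀ i, r i ≤ lam i) ∧ ∀ t : Fin m, lam t.succ + r t.castSucc ≤ lam t.castSucc with hGood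
  have hd : ∀ t : Fin m, lam t.succ ≤ lam t.castSucc := fun t => hlam (Fin.castSucc_le_succ t)
  have hFswap : ∀ (r : Fin (m+1) → ℕ) (t : Fin m),
      lam t.castSucc < lam t.succ + r t.castSucc → F (swapFun lam r t) = - F r := by
    intro r t hfail
    simp only [hF]
    rw [swapFun_sum lam r t (hd t) hfail, swapFun_D R lam r t (hd t) hfail, mul_neg]
  have step2 : ∑ r ∈ B.filter (fun r => ¬ Good r), F r = 0 := by
    rw [← Finset.sum_filter_ne_zero]
    set s : Finset (Fin (m+1) → ℕ) := (B.filter fun r => ¬ Good r).filter (fun r => F r ≠ 0)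
      with hs
    have hsmem : ∀ r ∈ s, r ∈ B ∧ ¬ Good r ∧ F r ≠ 0 := by
      intro r hr
      rw [hs, Finset.mem_filter, Finset.mem_filter] at hr
      exact ⟨hr.1.1, hr.1.2, hr.2⟩
    have hfailset : ∀ r ∈ s, (Finset.univ.filter
        (fun t : Fin m => lam t.castSucc < lam t.succ + r t.castSucc)).Nonempty := by
      intro r hr
      obtain ⟨hrB, hrG, hrF⟩ := hsmem r hr
      by_contra hne
      rw [Finset.not_nonempty_iff_eq_empty, Finset.filter_eq_empty_iff] at hne
      have hstrip : ∀ t : Fin m, lam t.succ + r t.castSucc ≤ lam t.castSucc := fun t => by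
        have := hne (Finset.mem_univ t); omega
      have hex : ∃ i, lam i < r i := by
        by_contra hno
        push_neg at hno
        exact hrG ⟨fun i => hno i, hstrip⟩
      obtain ⟨i, hi⟩ := hex
      have hilast : i = Fin.last m := by
        by_contra hne2
        have h1 : (i.castPred hne2).castSucc = i := Fin.castSucc_castPred i hne2
        have h2 := hstrip (i.castPred hne2)
        rw [h1] at h2
        omega
      subst hilast
      apply hrF
      simp only [hF]
      rw [D_row_zero R m _ (Fin.last m) (by simp only [Fin.val_last]; omega), mul_zero]
    refine Finset.sum_involution
      (fun r hr => swapFun lam r ((Finset.univ.filter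
        (fun t : Fin m => lam t.castSucc < lam t.succ + r t.castSucc)).min' (hfailset r hr)))
      ?_ ?_ ?_ ?_
    · -- f a + f (g a) = 0
      intro r hr
      set t0 := (Finset.univ.filter
        (fun t : Fin m => lam t.castSucc < lam t.succ + r t.castSucc)).min' (hfailset r hr)
        with ht0
      have hfail : lam t0.castSucc < lam t0.succ + r t0.castSucc := by
        have := Finset.min'_mem _ (hfailset r hr)
        rw [Finset.mem_filter] at this
        exact this.2
      rw [hFswap r t0 hfail]
      ring
    · -- F r ≠ 0 → g r ≠ r
      intro r hr hFr heq
      set t0 := (Finset.univ.filter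
        (fun t : Fin m => lam t.castSucc < lam t.succ + r t.castSucc)).min' (hfailset r hr)
        with ht0
      have hfail : lam t0.castSucc < lam t0.succ + r t0.castSucc := by
        have := Finset.min'_mem _ (hfailset r hr)
        rw [Finset.mem_filter] at this
        exact this.2
      have heq' : swapFun lam r t0 = r := heq
      have hval := congrFun heq' t0.castSucc
      rw [swapFun_castSucc] at hval
      apply hFr
      simp only [hF]
      rw [D_zero R m _ t0.castSucc t0.succ (castSucc_ne_succ t0)
        (by simp only [Fin.val_succ, Fin.coe_castSucc]; have := hd t0; omega), mul_zero]
    · -- g_mem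
      intro r hr
      obtain ⟨hrB, hrG, hrF⟩ := hsmem r hr
      set t0 := (Finset.univ.filter
        (fun t : Fin m => lam t.castSucc < lam t.succ + r t.castSucc)).min' (hfailset r hr)
        with ht0
      have hfail : lam t0.castSucc < lam t0.succ + r t0.castSucc := by
        have := Finset.min'_mem _ (hfailset r hr)
        rw [Finset.mem_filter] at this
        exact this.2
      have hFne : F (swapFun lam r t0) ≠ 0 := by
        rw [hFswap r t0 hfail]
        simpa using hrF
      have hrBval : ∀ k, r k ≤ N := by
        intro k
        have := (Fintype.mem_piFinset.1 hrB) k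
        rw [Finset.mem_range] at this
        omega
      show swapFun lam r t0 ∈ s
      refine Finset.mem_filter.2 ⟨Finset.mem_filter.2 ⟨?_, ?_⟩, hFne⟩
      · -- mem B
        rw [hB, Fintype.mem_piFinset]
        intro k
        rw [Finset.mem_range]
        rcases eq_or_ne k t0.castSucc with rfl | h1
        · rw [swapFun_castSucc]
          by_contra hv
          apply hFne
          simp only [hF]
          rw [D_row_zero R m _ t0.castSucc ?_, mul_zero]
          rw [swapFun_castSucc]
          have h5 := hlam0 t0.castSucc
          have h6 : (t0.castSucc : ℕ) ≤ m := Fin.is_le _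
          omega
        rcases eq_or_ne k t0.succ with rfl | h2
        · rw [swapFun_succ]
          have := hrBval t0.castSucc
          omega
        · rw [swapFun_other _ _ _ _ h1 h2]
          have := hrBval k
          omega
      · -- ¬ Good
        intro hGs
        have h7 := hGs.2 t0
        rw [swapFun_castSucc] at h7
        have := hd t0
        omega
    · -- involutive
      intro r hr
      set t0 := (Finset.univ.filter
        (fun t : Fin m => lam t.castSucc < lam t.succ + r t.castSucc)).min' (hfailset r hr)
        with ht0
      have hfail : lam t0.castSucc < lam t0.succ + r t0.castSucc := by
        have := Finset.min'_mem _ (hfailset r hr)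
        rw [Finset.mem_filter] at this
        exact this.2
      set r' := swapFun lam r t0 with hr'
      have hkey : ∀ t1 : Fin m, t1 < t0 → r' t1.castSucc = r t1.castSucc := by
        intro t1 hlt
        apply swapFun_other
        · intro hc
          exact absurd (Fin.castSucc_injective m hc) hlt.ne
        · intro hc
          have hc2 : (t1.castSucc : ℕ) = (t0.succ : ℕ) := by rw [hc]
          simp only [Fin.val_succ, Fin.coe_castSucc] at hc2
          have hc3 : (t1 : ℕ) < (t0 : ℕ) := hlt
          omega
      have hmem' : t0 ∈ Finset.univ.filter
          (fun t : Fin m => lam t.castSucc < lam t.succ + r' t.castSucc) := by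
        rw [Finset.mem_filter]
        refine ⟨Finset.mem_univ _, ?_⟩
        rw [hr', swapFun_castSucc]
        have := hd t0
        omega
      have hne' : (Finset.univ.filter
          (fun t : Fin m => lam t.castSucc < lam t.succ + r' t.castSucc)).Nonempty :=
        ⟨t0, hmem'⟩
      have ht1 : (Finset.univ.filter
          (fun t : Fin m => lam t.castSucc < lam t.succ + r' t.castSucc)).min' hne' = t0 := by
        apply le_antisymm (Finset.min'_le _ _ hmem')
        apply Finset.le_min'
        intro t1 hmem1
        by_contra hlt
        push_neg at hlt
        rw [Finset.mem_filter] at hmem1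
        have hfail1 := hmem1.2
        rw [hkey t1 hlt] at hfail1
        have : t0 ≤ t1 := Finset.min'_le _ t1
          (Finset.mem_filter.2 ⟨Finset.mem_univ _, hfail1⟩)
        omega
      show swapFun lam r' ((Finset.univ.filter
          (fun t : Fin m => lam t.castSucc < lam t.succ + r' t.castSucc)).min' hne') = r
      rw [ht1]
      exact swapFun_swapFun lam r t0 (hd t0) hfail
  have step3 : ∑ r ∈ B.filter Good, F r =
      ∑ μ ∈ (Finset.Iic lam).filter (fun μ => Antitone μ ∧ IsHorizontalStrip lam μ),
        (X (Fin.last m) : MvPolynomial (Fin (m + 1)) R) ^ ((∑ i, lam i) - ∑ i, μ i) *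
          rename Fin.castSucc (jacobiTrudi (Fin m) R (fun i => (μ i : ℤ))) := by
    refine Finset.sum_bij' (fun r _ => fun i => lam i - r i)
      (fun μ _ => fun i => lam i - μ i) ?_ ?_ ?_ ?_ ?_
    all_goals beta_reduce
    · intro r hr
      rw [Finset.mem_filter] at hr
      obtain ⟨hrB, hr1, hr2⟩ := hr
      rw [Finset.mem_filter]
      refine ⟨Finset.mem_Iic.2 fun i => Nat.sub_le _ _, ?_, fun i => Nat.sub_le _ _, ?_⟩
      · rw [Fin.antitone_iff_succ_le]
        intro t
        have h1 := hr2 t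
        have h2 := hr1 t.succ
        omega
      · intro i j hij
        have hjm : (j : ℕ) ≤ m := Fin.is_le j
        have him : (i : ℕ) < m := by omega
        have e1 : (⟨(i : ℕ), him⟩ : Fin m).castSucc = i := by
          apply Fin.ext
          simp
        have e2 : (⟨(i : ℕ), him⟩ : Fin m).succ = j := by
          apply Fin.ext
          simp
          omega
        rw [← e1, ← e2]
        have h3 := hr2 ⟨(i : ℕ), him⟩
        have h4 := hr1 (⟨(i : ℕ), him⟩ : Fin m).castSucc
        beta_reduce
        omega
    · intro μ hμ
      rw [Finset.mem_filter] at hμ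
      obtain ⟨hIic, hanti, hstrip⟩ := hμ
      have hle : ∀ i, μ i ≤ lam i := fun i => Finset.mem_Iic.1 hIic i
      rw [Finset.mem_filter]
      constructor
      · rw [hB, Fintype.mem_piFinset]
        intro i
        rw [Finset.mem_range]
        have := hlam0 i
        omega
      · refine ⟨fun i => Nat.sub_le _ _, ?_⟩
        intro t
        have h2 := hstrip.2 t.castSucc t.succ (by simp)
        have h3 := hle t.castSucc
        beta_reduce
        omega
    · intro r hr
      rw [Finset.mem_filter] at hr
      funext i
      have := hr.2.1 i
      beta_reduce
      omega
    · intro μ hμ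
      rw [Finset.mem_filter] at hμ
      funext i
      have hle5 : μ i ≤ lam i := Finset.mem_Iic.1 hμ.1 i
      beta_reduce
      omega
    · intro r hr
      rw [Finset.mem_filter] at hr
      obtain ⟨hrB, hr1, hr2⟩ := hr
      have hexp : (∑ i, lam i) - (∑ i, (lam i - r i)) = ∑ i, r i := by
        have hsum : ∑ i, (lam i - r i) + ∑ i, r i = ∑ i, lam i := by
          rw [← Finset.sum_add_distrib]
          exact Finset.sum_congr rfl fun i _ => by have := hr1 i; omega
        omega
      simp only [hF]
      rw [hexp, ← D_eq_rename]
      have hfun : (fun i => ((lam i - r i : ℕ) : ℤ)) = fun i => (lam i : ℤ) - r i := by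
        funext i
        have := hr1 i
        omega
      rw [hfun]
  rw [step1, ← Finset.sum_filter_add_sum_filter_not B Good, step2, add_zero, step3]
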